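/- Let 𝒮 be an n×n sign pattern and α ⊆ {1,…,n}. Then every matrix W in the sign pattern class Q(𝒮) has α stable (i.e., α is sign stable for 𝒮) if and only if the matrix diag(s_α) · 𝒮 · diag(p_α) is row positive, i.e. entrywise nonnegative with at least one strictly positive entry in each row. Equivalently: for every row i ∈ {1,…,n}, one has (s_α)_i · 𝒮_{ij} ≥ 0 for all j ∈ α, and there exists j ∈ α with 𝒮_{ij} = (s_α)_i. -/

import Mathlib

open Finset

/-- Signature of a set: `+1` on `α`, `-1` off `α`. -/
def sgn {n : ℕ} (α : Finset (Fin n)) (i : Fin n) : ℝ := if i ∈ α then 1 else -1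

/-- Code of a set: `1` on `α`, `0` off `α`. -/
def code {n : ℕ} (α : Finset (Fin n)) (i : Fin n) : ℝ := if i ∈ α then 1 else 0

/-- `α` is a stable set for the weight matrix `W`. -/
def IsStable {n : ℕ} (W : Matrix (Fin n) (Fin n) ℝ) (α : Finset (Fin n)) : Prop :=
  ∀ i, 0 < sgn α i * ∑ j ∈ α, W i j

/-- `S` is a sign pattern: all entries in `{-1,0,1}`. -/
def IsSignPattern {n : ℕ} (S : Matrix (Fin n) (Fin n) ℝ) : Prop :=
  ∀ i j, S i j = -1 ∨ S i j = 0 ∨ S i j = 1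

/-- `W` belongs to the sign pattern class `Q(S)`. -/
def InSignClass {n : ℕ} (W S : Matrix (Fin n) (Fin n) ℝ) : Prop :=
  ∃ Wp : Matrix (Fin n) (Fin n) ℝ, (∀ i j, 0 < Wp i j) ∧ ∀ i j, W i j = Wp i j * S i j

/-- A matrix is row positive if it is entrywise nonnegative with at least one
strictly positive entry in each row. -/
def RowPositive {n : ℕ} (M : Matrix (Fin n) (Fin n) ℝ) : Prop :=
  (∀ i j, 0 ≤ M i j) ∧ ∀ i, ∃ j, 0 < M i j

lemma code_mem {n : ℕ} {α : Finset (Fin n)} {j : Fin n} (h : j ∈ α) : code α j = 1 :=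
  if_pos h

lemma code_not_mem {n : ℕ} {α : Finset (Fin n)} {j : Fin n} (h : j ∉ α) : code α j = 0 :=
  if_neg h

lemma sgn_cases {n : ℕ} (α : Finset (Fin n)) (i : Fin n) :
    sgn α i = 1 ∨ sgn α i = -1 := by
  unfold sgn; split <;> simp

/-- `α` is sign stable for the sign pattern `S` (i.e. stable for every `W ∈ Q(S)`)
iff `diag(s_α) · S · diag(p_α)` is row positive. -/
theorem stmt9 (n : ℕ) (S : Matrix (Fin n) (Fin n) ℝ) (hS : IsSignPattern S)
    (α : Finset (Fin n)) :
    (∀ W : Matrix (Fin n) (Fin n) ℝ, InSignClass W S → IsStable W α) ↔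
      RowPositive (Matrix.diagonal (sgn α) * S * Matrix.diagonal (code α)) := by
  have hM : ∀ i j, (Matrix.diagonal (sgn α) * S * Matrix.diagonal (code α)) i j
      = sgn α i * S i j * code α j := by
    intro i j
    rw [Matrix.mul_diagonal, Matrix.diagonal_mul]
  constructor
  · intro h
    constructor
    · intro i j
      rw [hM]
      by_cases hj : j ∈ α
      · have hcj : code α j = 1 := if_pos hj
        rw [hcj, mul_one]
        by_contra hneg
        push_neg at hneg
        -- sgn α i * S i j = -1
        have hprod : sgn α i * S i j = -1 := by
          rcases sgn_cases α i with hs | hs <;> rcases hS i j with h1 | h1 | h1 <;>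
            rw [hs, h1] at hneg ⊢ <;> norm_num at hneg <;> norm_num
        set c : ℝ := (n : ℝ) + 1 with hc_def
        have hc : (0:ℝ) < c := by positivity
        have hW : InSignClass (fun k l => (if k = i ∧ l = j then c else 1) * S k l) S := by
          refine ⟨fun k l => if k = i ∧ l = j then c else 1, fun k l => ?_, fun k l => rfl⟩
          dsimp only
          split
          · exact hc
          · norm_num
        have hst := h _ hW i
        rw [Finset.mul_sum] at hst
        rw [← Finset.add_sum_erase _ _ hj] at hst
        have hterm : sgn α i * ((if i = i ∧ j = j then c else 1) * S i j) = -c := by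
          rw [if_pos (⟨rfl, rfl⟩ : i = i ∧ j = j)]
          calc sgn α i * (c * S i j) = c * (sgn α i * S i j) := by ring
          _ = -c := by rw [hprod]; ring
        rw [hterm] at hst
        have hbound : ∑ j' ∈ α.erase j, sgn α i * ((if i = i ∧ j' = j then c else 1) * S i j')
            ≤ (α.erase j).card • (1:ℝ) := by
          apply Finset.sum_le_card_nsmul
          intro j' hj'
          have hne : j' ≠ j := Finset.ne_of_mem_erase hj'
          rw [if_neg (by tauto), one_mul]
          rcases sgn_cases α i with hs | hs <;> rcases hS i j' with h1 | h1 | h1 <;>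
            rw [hs, h1] <;> norm_num
        have hcard : ((α.erase j).card : ℝ) ≤ n := by
          have := Finset.card_le_card (Finset.erase_subset j α)
          have h2 : α.card ≤ n := by
            simpa using Finset.card_le_card (Finset.subset_univ α)
          exact_mod_cast le_trans this h2
        rw [nsmul_eq_mul, mul_one] at hbound
        linarith
      · have hcj : code α j = 0 := if_neg hj
        rw [hcj, mul_zero]
    · intro i
      have hW : InSignClass S S := ⟨fun _ _ => 1, fun _ _ => one_pos,
        fun k l => (one_mul _).symm⟩
      have hst := h S hW i
      rw [Finset.mul_sum] at hst
      by_contra hno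
      push_neg at hno
      have : ∑ j ∈ α, sgn α i * S i j ≤ 0 := by
        apply Finset.sum_nonpos
        intro j hj
        have := hno j
        rw [hM, code_mem hj, mul_one] at this
        exact this
      linarith
  · rintro ⟨hnn, hpos⟩ W ⟨Wp, hWp, hWdef⟩ i
    rw [Finset.mul_sum]
    apply Finset.sum_pos'
    · intro j hj
      rw [hWdef]
      have h1 := hnn i j
      rw [hM, code_mem hj, mul_one] at h1
      nlinarith [hWp i j]
    · obtain ⟨j, hjpos⟩ := hpos i
      rw [hM] at hjpos
      have hj : j ∈ α := by
        by_contra hj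
        rw [code_not_mem hj, mul_zero] at hjpos
        exact lt_irrefl _ hjpos
      refine ⟨j, hj, ?_⟩
      rw [hWdef]
      rw [code_mem hj, mul_one] at hjpos
      nlinarith [hWp i j]
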